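/- Assume product-form coefficients a_i = ∏_{q=1}^d a_{i_q}(q) with each (a_i(q))_{i∈ℤ} square-summable. For n∈ℕ^d and j∈ℤ^d set b_{n,j} = ∑_{i: 1≤i_q≤n_q ∀q} a_{i−j}, b_{n,j}(q) = ∑_{i=1}^{n_q} a_{i−j_q}(q), and b_n(q) = (∑_{j_q∈ℤ} b_{n,j}(q)²)^{1/2}. Then for all n, m ∈ ℕ^d, ∑_{j∈ℤ^d} b_{n,j} b_{m,j} = ∏_{q=1}^d ½ (b_n(q)² + b_m(q)² − b_{|n−m|}(q)²), where |n−m| is taken componentwise. -/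

import Mathlib

open MeasureTheory ProbabilityTheory Filter Topology BoundedContinuousFunction
open scoped ENNReal NNReal BigOperators

/-- Product-form coefficients `a_i = ∏_{q=1}^d a_{i_q}(q)`. -/
def prodCoef {d : ℕ} (aq : Fin d → ℤ → ℝ) (i : Fin d → ℤ) : ℝ :=
  ∏ q : Fin d, aq q (i q)

/-- The rectangle `Λ_n = {1,…,n_1} × ⋯ × {1,…,n_d} ⊂ ℤ^d`. -/
noncomputable def Lambda (d : ℕ) (n : Fin d → ℕ) : Finset (Fin d → ℤ) :=
  Fintype.piFinset fun q => Finset.Icc 1 (n q : ℤ)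

/-- `b_{n,j} = ∑_{i ∈ Λ_n} a_{i-j}` for product-form coefficients. -/
noncomputable def bProd {d : ℕ} (aq : Fin d → ℤ → ℝ) (n : Fin d → ℕ) (j : Fin d → ℤ) : ℝ :=
  ∑ i ∈ Lambda d n, prodCoef aq (i - j)

/-- One-dimensional coefficients `b_{n,j}(q) = ∑_{i=1}^{n_q} a_{i-j_q}(q)`. -/
noncomputable def b1 (a : ℤ → ℝ) (nq : ℕ) (jq : ℤ) : ℝ :=
  ∑ i ∈ Finset.Icc (1 : ℤ) (nq : ℤ), a (i - jq)

/-- `b_n(q) = (∑_{j_q ∈ ℤ} b_{n,j}(q)²)^{1/2}`. -/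
noncomputable def b1norm (a : ℤ → ℝ) (nq : ℕ) : ℝ :=
  Real.sqrt (∑' j : ℤ, (b1 a nq j) ^ 2)

/- ### Auxiliary lemmas -/

lemma b1_sq_summable (a : ℤ → ℝ) (ha : Summable fun i : ℤ => (a i) ^ 2) (N : ℕ) :
    Summable fun j : ℤ => (b1 a N j) ^ 2 := by
  have hsum : Summable fun j : ℤ =>
      ((Finset.Icc (1:ℤ) (N:ℤ)).card : ℝ) * ∑ i ∈ Finset.Icc (1:ℤ) (N:ℤ), (a (i - j)) ^ 2 := by
    apply Summable.mul_left
    exact summable_sum fun i _ => ha.comp_injective (fun x y hxy => by omega)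
  refine Summable.of_nonneg_of_le (fun j => sq_nonneg _) (fun j => ?_) hsum
  exact sq_sum_le_card_mul_sum_sq

lemma b1_mul_summable (a : ℤ → ℝ) (ha : Summable fun i : ℤ => (a i) ^ 2) (n m : ℕ) :
    Summable fun j : ℤ => b1 a n j * b1 a m j := by
  apply Summable.of_abs
  refine Summable.of_nonneg_of_le (fun j => abs_nonneg _) (fun j => ?_)
    (((b1_sq_summable a ha n).add (b1_sq_summable a ha m)).mul_left (1/2 : ℝ))
  rw [abs_mul]
  nlinarith [sq_nonneg (|b1 a n j| - |b1 a m j|), sq_abs (b1 a n j), sq_abs (b1 a m j),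
    abs_nonneg (b1 a n j), abs_nonneg (b1 a m j)]

lemma b1_Ioc (a : ℤ → ℝ) (N : ℕ) (j : ℤ) :
    b1 a N j = ∑ i ∈ Finset.Ioc (0:ℤ) (N:ℤ), a (i - j) := by
  unfold b1
  congr 1
  ext x; simp [Int.lt_iff_add_one_le]

lemma b1_sub (a : ℤ → ℝ) (n m : ℕ) (h : m ≤ n) (j : ℤ) :
    b1 a n j - b1 a m j = b1 a (n - m) (j - (m:ℤ)) := by
  rw [b1_Ioc, b1_Ioc, b1_Ioc]
  have h0 : (0:ℤ) ≤ (m:ℤ) := Int.ofNat_nonneg m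
  have hmn : (m:ℤ) ≤ (n:ℤ) := by exact_mod_cast h
  rw [← Finset.Ioc_union_Ioc_eq_Ioc h0 hmn,
    Finset.sum_union (by simp [Finset.disjoint_left]; omega)]
  have : Finset.Ioc (m:ℤ) (n:ℤ) = (Finset.Ioc (0:ℤ) ((n - m : ℕ):ℤ)).map
      (addRightEmbedding (m:ℤ)) := by
    rw [Finset.map_add_right_Ioc]
    congr 1
    · ring
    · push_cast [h]; ring
  rw [this, Finset.sum_map]
  simp only [addRightEmbedding, Function.Embedding.coeFn_mk]
  have : ∀ x : ℤ, x + (m:ℤ) - j = x - (j - m) := fun x => by ring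
  rw [add_sub_cancel_left]
  exact Finset.sum_congr rfl (fun x _ => by rw [this])

lemma tsum_b1_sub_sq (a : ℤ → ℝ) (n m : ℕ) (h : m ≤ n) :
    ∑' j : ℤ, (b1 a n j - b1 a m j) ^ 2 = ∑' j : ℤ, (b1 a (n - m) j) ^ 2 := by
  have : ∀ j : ℤ, (b1 a n j - b1 a m j) ^ 2 = (b1 a (n - m) (j - (m:ℤ))) ^ 2 := fun j => by
    rw [b1_sub a n m h j]
  rw [tsum_congr this]
  exact (Equiv.subRight (m:ℤ)).tsum_eq (fun j => (b1 a (n - m) j) ^ 2)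

lemma b1_sub_sq_summable (a : ℤ → ℝ) (ha : Summable fun i : ℤ => (a i) ^ 2) (n m : ℕ) :
    Summable fun j : ℤ => (b1 a n j - b1 a m j) ^ 2 := by
  have h : ∀ j, (b1 a n j - b1 a m j)^2 ≤ 2 * (b1 a n j)^2 + 2 * (b1 a m j)^2 := fun j => by
    nlinarith [sq_nonneg (b1 a n j + b1 a m j)]
  exact Summable.of_nonneg_of_le (fun j => sq_nonneg _) h
    (((b1_sq_summable a ha n).mul_left 2).add ((b1_sq_summable a ha m).mul_left 2))

lemma b1norm_sq (a : ℤ → ℝ) (N : ℕ) :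
    (b1norm a N) ^ 2 = ∑' j : ℤ, (b1 a N j) ^ 2 := by
  unfold b1norm
  exact Real.sq_sqrt (tsum_nonneg fun j => sq_nonneg _)

/-- The one-dimensional polarization identity. -/
lemma one_dim_polarization (a : ℤ → ℝ) (ha : Summable fun i : ℤ => (a i) ^ 2) (n m : ℕ) :
    ∑' j : ℤ, b1 a n j * b1 a m j =
      (1 / 2) * ((b1norm a n) ^ 2 + (b1norm a m) ^ 2 - (b1norm a (Nat.dist n m)) ^ 2) := by
  have key : ∑' j : ℤ, (b1 a n j - b1 a m j) ^ 2 = (b1norm a (Nat.dist n m)) ^ 2 := by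
    rcases le_total m n with h | h
    · rw [b1norm_sq, Nat.dist_eq_sub_of_le_right h, tsum_b1_sub_sq a n m h]
    · rw [b1norm_sq, Nat.dist_eq_sub_of_le h, ← tsum_b1_sub_sq a m n h]
      exact tsum_congr fun j => by ring
  have hn := b1_sq_summable a ha n
  have hm := b1_sq_summable a ha m
  have hd := b1_sub_sq_summable a ha n m
  have pointwise : ∀ j : ℤ, b1 a n j * b1 a m j =
      (1/2) * ((b1 a n j)^2 + (b1 a m j)^2 - (b1 a n j - b1 a m j)^2) := fun j => by ring
  rw [tsum_congr pointwise, tsum_mul_left, Summable.tsum_sub (hn.add hm) hd, Summable.tsum_add hn hm,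
    b1norm_sq, b1norm_sq, key]

/-- Factorization of `bProd`. -/
lemma bProd_eq_prod (d : ℕ) (aq : Fin d → ℤ → ℝ) (n : Fin d → ℕ) (j : Fin d → ℤ) :
    bProd aq n j = ∏ q : Fin d, b1 (aq q) (n q) (j q) := by
  unfold bProd Lambda prodCoef b1
  rw [Finset.prod_univ_sum]
  exact Finset.sum_congr rfl fun i _ => Finset.prod_congr rfl fun q _ => rfl

/-- tsum of a product over a pi type factors. -/
lemma tsum_pi_prod : ∀ (d : ℕ) (f : Fin d → ℤ → ℝ), (∀ q, Summable (f q)) →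
    Summable (fun j : Fin d → ℤ => ∏ q : Fin d, f q (j q)) ∧
    ∑' j : Fin d → ℤ, ∏ q : Fin d, f q (j q) = ∏ q : Fin d, ∑' x : ℤ, f q x := by
  intro d
  induction d with
  | zero =>
    intro f hf
    constructor
    · exact Summable.of_finite
    · simp [tsum_fintype]
  | succ d ih =>
    intro f hf
    obtain ⟨ihs, ihe⟩ := ih (fun q => f q.succ) (fun q => hf q.succ)
    let e : ℤ × (Fin d → ℤ) ≃ (Fin (d+1) → ℤ) := Fin.consEquiv (fun _ => ℤ)
    have hcomp : ∀ p : ℤ × (Fin d → ℤ),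
        (∏ q : Fin (d+1), f q (e p q)) = f 0 p.1 * ∏ q : Fin d, f q.succ (p.2 q) := by
      intro p
      simp only [e, Fin.prod_univ_succ, Fin.consEquiv_apply, Fin.cons_zero, Fin.cons_succ]
    have ha0 : Summable fun x : ℤ => ‖f 0 x‖ := by
      simpa only [Real.norm_eq_abs] using (hf 0).abs
    have ha1 : Summable fun y : Fin d → ℤ => ‖∏ q : Fin d, f q.succ (y q)‖ := by
      simpa only [Real.norm_eq_abs] using ihs.abs
    have hns : Summable fun p : ℤ × (Fin d → ℤ) => f 0 p.1 * ∏ q : Fin d, f q.succ (p.2 q) :=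
      summable_mul_of_summable_norm (f := f 0)
        (g := fun y : Fin d → ℤ => ∏ q : Fin d, f q.succ (y q)) ha0 ha1
    have hs : Summable (fun j : Fin (d+1) → ℤ => ∏ q : Fin (d+1), f q (j q)) := by
      rw [← e.summable_iff]
      exact hns.congr fun p => (hcomp p).symm
    refine ⟨hs, ?_⟩
    rw [← e.tsum_eq, tsum_congr hcomp,
      ← tsum_mul_tsum_of_summable_norm (f := f 0)
        (g := fun y : Fin d → ℤ => ∏ q : Fin d, f q.succ (y q)) ha0 ha1, ihe, Fin.prod_univ_succ]

/-- product polarization identity: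
`∑_{j∈ℤ^d} b_{n,j} b_{m,j} = ∏_q ½ (b_n(q)² + b_m(q)² - b_{|n-m|}(q)²)`. -/
theorem product_polarization
    (d : ℕ) (hd : 1 ≤ d)
    (aq : Fin d → ℤ → ℝ) (hsq : ∀ q, Summable fun i : ℤ => (aq q i) ^ 2)
    (n m : Fin d → ℕ) :
    Summable (fun j : Fin d → ℤ => bProd aq n j * bProd aq m j) ∧
    ∑' j : Fin d → ℤ, bProd aq n j * bProd aq m j =
      ∏ q : Fin d, (1 / 2) * ((b1norm (aq q) (n q)) ^ 2 + (b1norm (aq q) (m q)) ^ 2 -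
        (b1norm (aq q) (Nat.dist (n q) (m q))) ^ 2) := by
  set f : Fin d → ℤ → ℝ := fun q x => b1 (aq q) (n q) x * b1 (aq q) (m q) x with hf
  have hfs : ∀ q, Summable (f q) := fun q => b1_mul_summable (aq q) (hsq q) (n q) (m q)
  have hpt : ∀ j : Fin d → ℤ, bProd aq n j * bProd aq m j = ∏ q : Fin d, f q (j q) := by
    intro j
    rw [bProd_eq_prod, bProd_eq_prod, ← Finset.prod_mul_distrib]
  obtain ⟨hs, he⟩ := tsum_pi_prod d f hfs
  constructor
  · exact hs.congr fun j => (hpt j).symm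
  · rw [tsum_congr hpt, he]
    exact Finset.prod_congr rfl fun q _ => one_dim_polarization (aq q) (hsq q) (n q) (m q)
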